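/- Let Q₁, Q₂ be orthogonal projections in a tracial von Neumann (or C*-) probability space (𝒜, τ) with τ(Q₁) = τ(Q₂) = α. Then for every j ≥ 1, τ((Q₁ + Q₂ - 1)^{2j}) = 2 τ((Q₁Q₂Q₁)^j) - (2α - 1). -/
import Mathlib

section DemniHamdiAux

variable {A : Type*} [Ring A]

/-- `(xy)^{j+1} = x ((yx)^j y)`. -/
lemma aux_xy_pow (x y : A) : ∀ j : ℕ, (x*y)^(j+1) = x * ((y*x)^j * y) := by
  intro j
  induction j with
  | zero => simp
  | succ n ih =>
      rw [pow_succ, ih, pow_succ]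
      simp only [mul_assoc]

/-- If `P M = X` and `X P = X`, then `P M^{n+1} = X^{n+1}`. -/
lemma aux_pow_proj (P M X : A) (hPM : P*M = X) (hXP : X*P = X) :
    ∀ n : ℕ, P * M^(n+1) = X^(n+1) := by
  intro n
  induction n with
  | zero => simpa using hPM
  | succ n ih =>
      have hXM : X * M = X * X := by
        conv_lhs => rw [← hXP]
        rw [mul_assoc, hPM]
      calc P * M^(n+1+1) = (P * M^(n+1)) * M := by rw [pow_succ, mul_assoc]
        _ = X^n * (X * M) := by rw [ih, pow_succ, mul_assoc]
        _ = (X^n * X) * X := by rw [hXM, mul_assoc]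
        _ = X^(n+1+1) := by rw [← pow_succ, ← pow_succ]

/-- Projection compression of the square of `P + Q - 1`. -/
lemma aux_PS2 (P Q : A) (hP : P*P = P) (hQ : Q*Q = Q) :
    P * ((P+Q-1)*(P+Q-1)) = P*Q*P := by
  linear_combination (norm := noncomm_ring) hP * P + hP * Q + P * hQ - hP

variable [Algebra ℂ A]

/-- Trace invariance under cyclic swap, for powers. -/
lemma aux_tr_swap (τ : A →ₗ[ℂ] ℂ) (htr : ∀ x y : A, τ (x*y) = τ (y*x))
    (x y : A) (j : ℕ) : τ ((x*y)^(j+1)) = τ ((y*x)^(j+1)) := by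
  rw [aux_xy_pow, htr, mul_assoc, ← pow_succ]

end DemniHamdiAux

/-- Demni–Hamdi identity: for any two orthogonal projections `Q₁, Q₂` of common
trace `α` in a tracial noncommutative probability space (no freeness assumed),
`τ((Q₁+Q₂-1)^{2j}) = 2τ((Q₁Q₂Q₁)^j) - (2α-1)` for all `j ≥ 1`. -/
theorem stmt_19 {A : Type*} [Ring A] [StarRing A] [Algebra ℂ A]
    (τ : A →ₗ[ℂ] ℂ) (hτ1 : τ 1 = 1) (htr : ∀ x y : A, τ (x*y) = τ (y*x))
    (Q₁ Q₂ : A) (hQ₁ : Q₁*Q₁ = Q₁) (hQ₂ : Q₂*Q₂ = Q₂)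
    (hs₁ : star Q₁ = Q₁) (hs₂ : star Q₂ = Q₂)
    (α : ℂ) (hα₁ : τ Q₁ = α) (hα₂ : τ Q₂ = α) :
    ∀ j : ℕ, 1 ≤ j →
      τ ((Q₁ + Q₂ - 1)^(2*j)) = 2 * τ ((Q₁*Q₂*Q₁)^j) - (2*α - 1) := by
  intro j hj
  obtain ⟨n, rfl⟩ : ∃ n, j = n + 1 := ⟨j - 1, (Nat.succ_pred_eq_of_pos hj).symm⟩
  -- notation
  set S : A := Q₁ + Q₂ - 1 with hS
  set R : A := Q₁ - Q₂ with hR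
  set X : A := Q₁*Q₂*Q₁ with hX
  set Y : A := Q₂*Q₁*Q₂ with hY
  -- basic algebraic facts
  have hRS : R * S = -(S * R) := by
    rw [hR, hS]
    linear_combination (norm := noncomm_ring) 2 * hQ₁ - 2 * hQ₂
  have hRR : R * R = 1 - S * S := by
    rw [hR, hS]
    linear_combination (norm := noncomm_ring) 2 * hQ₁ + 2 * hQ₂
  have hQ1S : Q₁ * (S * S) = X := aux_PS2 Q₁ Q₂ hQ₁ hQ₂
  have hQ2S : Q₂ * (S * S) = Y := by
    have := aux_PS2 Q₂ Q₁ hQ₂ hQ₁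
    rwa [add_comm Q₂ Q₁] at this
  have hXQ : X * Q₁ = X := by
    rw [hX]; linear_combination (norm := noncomm_ring) Q₁ * Q₂ * hQ₁
  have hYQ : Y * Q₂ = Y := by
    rw [hY]; linear_combination (norm := noncomm_ring) Q₂ * Q₁ * hQ₂
  -- R commutes with S*S
  have hRSS : R * (S * S) = (S * S) * R := by
    rw [← mul_assoc, hRS, neg_mul, mul_assoc, hRS, mul_neg, neg_neg, ← mul_assoc]
  have hcommute : Commute R (S*S) := hRSS
  have hcomm : ∀ k : ℕ, R * (S*S)^k = (S*S)^k * R := fun k =>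
    (hcommute.pow_right k).eq
  -- odd traces are constant: τ(S^{2k+1}) = 2α - 1
  have hodd : ∀ k : ℕ, τ (S * (S*S)^k) = 2*α - 1 := by
    intro k
    induction k with
    | zero =>
        simp only [pow_zero, mul_one, hS, map_sub, map_add, hτ1, hα₁, hα₂]
        ring
    | succ k ih =>
        have hanti : R * (S * (S*S)^k) = -((S * (S*S)^k) * R) := by
          rw [← mul_assoc, hRS, neg_mul, mul_assoc, hcomm, ← mul_assoc]
        have hzero : τ ((S * (S*S)^k) * (R * R)) = 0 := by
          have h1 : τ ((S * (S*S)^k) * (R * R))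
              = τ (R * ((S * (S*S)^k) * R)) := by
            rw [← mul_assoc, htr ((S * (S*S)^k) * R) R]
          have h2 : R * ((S * (S*S)^k) * R)
              = -((S * (S*S)^k) * (R * R)) := by
            rw [← mul_assoc, hanti, neg_mul, mul_assoc]
          rw [h2, map_neg] at h1
          linear_combination h1 / 2
        have hstep : S * (S*S)^(k+1)
            = S * (S*S)^k - (S * (S*S)^k) * (R * R) := by
          rw [pow_succ, ← mul_assoc]
          rw [hRR]
          noncomm_ring
        rw [hstep, map_sub, hzero, ih, sub_zero]
  -- projection compressions of even powers
  have hP1 : Q₁ * (S*S)^(n+1) = X^(n+1) := aux_pow_proj Q₁ (S*S) X hQ1S hXQ n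
  have hP2 : Q₂ * (S*S)^(n+1) = Y^(n+1) := aux_pow_proj Q₂ (S*S) Y hQ2S hYQ n
  -- τ(Y^{n+1}) = τ(X^{n+1})
  have hXtr : τ (X^(n+1)) = τ ((Q₁*Q₂)^(n+1)) := by
    have h := aux_tr_swap τ htr (Q₁*Q₂) Q₁ n
    have e : Q₁ * (Q₁ * Q₂) = Q₁ * Q₂ := by rw [← mul_assoc, hQ₁]
    rw [hX]; rw [e] at h; exact h
  have hYtr : τ (Y^(n+1)) = τ ((Q₁*Q₂)^(n+1)) := by
    have h := aux_tr_swap τ htr (Q₂*Q₁) Q₂ n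
    have e : Q₂ * (Q₂ * Q₁) = Q₂ * Q₁ := by rw [← mul_assoc, hQ₂]
    rw [e] at h
    rw [hY, h, aux_tr_swap τ htr Q₂ Q₁ n]
  -- decomposition 1 = Q₁ + Q₂ - S
  have hone : Q₁ + Q₂ - S = 1 := by rw [hS]; abel
  have hdecomp : (S*S)^(n+1)
      = Q₁ * (S*S)^(n+1) + Q₂ * (S*S)^(n+1) - S * (S*S)^(n+1) := by
    rw [← add_mul, ← sub_mul, hone, one_mul]
  -- assemble
  have hpow : S^(2*(n+1)) = (S*S)^(n+1) := by
    rw [pow_mul, pow_two]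
  rw [hpow, hdecomp, map_sub, map_add, hP1, hP2, hodd (n+1), hYtr, ← hXtr]
  ring
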